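/- arXiv:1005.1042 — 3 statements merged into one kernel-verified Lean document; each statement's English description precedes it below -/
import Mathlib

section
/- For the polynomial f = x² + u y² + 2 v y z + w z² + (u w − v²) t² in variables x,y,z,w,u,v,t, the 4×4 matrices Ψ = xI + Ξ and Φ = xI − Ξ, where Ξ is the matrix [[−vt, y, z, t], [−uy−2vz, vt, −ut, z], [−wz, wt, −vt, −y], [−uwt, −wz, uy+2vz, vt]], satisfy ΨΦ = ΦΨ = f·I. -/
open MvPolynomial

noncomputable section

abbrev S0 : Type := MvPolynomial (Fin 7) ℂ

-- variables: x, y, z, w, u, v, t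
def x0 : S0 := X 0
def y0 : S0 := X 1
def z0 : S0 := X 2
def w0 : S0 := X 3
def u0 : S0 := X 4
def v0 : S0 := X 5
def t0 : S0 := X 6

def f0 : S0 := x0^2 + u0*y0^2 + 2*v0*y0*z0 + w0*z0^2 + (u0*w0 - v0^2)*t0^2

def Xi0 : Matrix (Fin 4) (Fin 4) S0 :=
  !![-v0*t0, y0, z0, t0;
     -u0*y0 - 2*v0*z0, v0*t0, -u0*t0, z0;
     -w0*z0, w0*t0, -v0*t0, -y0;
     -u0*w0*t0, -w0*z0, u0*y0 + 2*v0*z0, v0*t0]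

def Psi0 : Matrix (Fin 4) (Fin 4) S0 := x0 • (1 : Matrix (Fin 4) (Fin 4) S0) + Xi0
def Phi0 : Matrix (Fin 4) (Fin 4) S0 := x0 • (1 : Matrix (Fin 4) (Fin 4) S0) - Xi0

set_option maxHeartbeats 4000000 in
theorem universal_flop_matrix_factorization :
    Psi0 * Phi0 = f0 • (1 : Matrix (Fin 4) (Fin 4) S0) ∧
    Phi0 * Psi0 = f0 • (1 : Matrix (Fin 4) (Fin 4) S0) := by
  have h : Xi0 * Xi0 = (x0^2 - f0) • (1 : Matrix (Fin 4) (Fin 4) S0) := by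
    refine Matrix.ext fun i j => ?_
    fin_cases i <;> fin_cases j <;>
      simp [Xi0, f0, Matrix.mul_apply, Fin.sum_univ_four, Matrix.one_apply] <;> ring
  have hc : Commute (x0 • (1 : Matrix (Fin 4) (Fin 4) S0)) Xi0 := by
    unfold Commute SemiconjBy
    rw [Matrix.smul_mul, Matrix.one_mul, Matrix.mul_smul, Matrix.mul_one]
  have ha : (x0 • (1 : Matrix (Fin 4) (Fin 4) S0)) * (x0 • 1) = (x0^2) • 1 := by
    rw [Matrix.smul_mul, Matrix.one_mul, smul_smul, pow_two]
  have hsub : (x0^2) • (1 : Matrix (Fin 4) (Fin 4) S0) - (x0^2 - f0) • 1 = f0 • 1 := by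
    rw [sub_smul, sub_sub_cancel]
  constructor
  · rw [Psi0, Phi0, ← hc.mul_self_sub_mul_self_eq, ha, h, hsub]
  · rw [Psi0, Phi0, ← hc.mul_self_sub_mul_self_eq', ha, h, hsub]
end
end

section
/- For the Morrison–Pinkham polynomial f = x² + y³ + wz² + w³y − λwy² − λw⁴ in ℂ[w,x,y,z] (λ ∈ ℂ a parameter), the 4×4 matrices Ψ = [[x, y, z, −w], [−(y−λw)y, x, (y−λw)w, z], [−wz, −w², x, −y], [(y−λw)w², −wz, (y−λw)y, x]] and Φ = [[x, −y, −z, w], [(y−λw)y, x, −(y−λw)w, −z], [wz, w², x, y], [−(y−λw)w², wz, −(y−λw)y, x]] satisfy ΨΦ = ΦΨ = f·I₄. -/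
open MvPolynomial

noncomputable section

abbrev S4 : Type := MvPolynomial (Fin 4) ℂ

def w4 : S4 := X 0
def x4 : S4 := X 1
def y4 : S4 := X 2
def z4 : S4 := X 3

def fMP (l : ℂ) : S4 :=
  x4^2 + y4^3 + w4*z4^2 + w4^3*y4 - C l * w4 * y4^2 - C l * w4^4

def PsiMP (l : ℂ) : Matrix (Fin 4) (Fin 4) S4 :=
  !![x4, y4, z4, -w4;
     -(y4 - C l * w4)*y4, x4, (y4 - C l * w4)*w4, z4;
     -w4*z4, -w4^2, x4, -y4;
     (y4 - C l * w4)*w4^2, -w4*z4, (y4 - C l * w4)*y4, x4]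

def PhiMP (l : ℂ) : Matrix (Fin 4) (Fin 4) S4 :=
  !![x4, -y4, -z4, w4;
     (y4 - C l * w4)*y4, x4, -(y4 - C l * w4)*w4, -z4;
     w4*z4, w4^2, x4, y4;
     -(y4 - C l * w4)*w4^2, w4*z4, -(y4 - C l * w4)*y4, x4]

theorem morrison_pinkham_matrix_factorization (l : ℂ) :
    PsiMP l * PhiMP l = fMP l • (1 : Matrix (Fin 4) (Fin 4) S4) ∧
    PhiMP l * PsiMP l = fMP l • (1 : Matrix (Fin 4) (Fin 4) S4) := by
  constructor <;>
  · refine Matrix.ext fun i j => ?_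
    fin_cases i <;> fin_cases j <;>
      simp [PsiMP, PhiMP, fMP, Matrix.mul_apply, Fin.sum_univ_four, smul_eq_mul] <;>
      ring

end
end

section
/- Let S be a commutative ring, f ∈ S a nonzerodivisor, and (Ψ, Φ) a matrix factorization of f (ΨΦ = ΦΨ = f·Iₙ over S). Then the 2-periodic complex of R = S/(f)-modules ⋯ → Rⁿ →^Ψ̄ Rⁿ →^Φ̄ Rⁿ →^Ψ̄ Rⁿ is exact at the middle term: ker(Φ̄) = im(Ψ̄), provided S has no zero divisors and f ≠ 0. (Eisenbud's periodicity: matrix factorizations give 2-periodic exact resolutions of coker Ψ̄.) -/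
lemma map_mulVec_comm {S R : Type*} [CommRing S] [CommRing R] (π : S →+* R)
    {n : ℕ} (A : Matrix (Fin n) (Fin n) S) (u : Fin n → S) :
    (A.map π).mulVec (fun i => π (u i)) = fun i => π (A.mulVec u i) := by
  funext i
  simp [Matrix.mulVec, dotProduct, map_sum]

theorem matrix_factorization_exactness
    {S : Type*} [CommRing S] [IsDomain S] (f : S) (hf : f ≠ 0)
    (n : ℕ) (Psi Phi : Matrix (Fin n) (Fin n) S)
    (h1 : Psi * Phi = f • (1 : Matrix (Fin n) (Fin n) S))
    (h2 : Phi * Psi = f • (1 : Matrix (Fin n) (Fin n) S)) :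
    let π := Ideal.Quotient.mk (Ideal.span {f})
    LinearMap.ker ((Phi.map π).mulVecLin) = LinearMap.range ((Psi.map π).mulVecLin) := by
  intro π
  have hπf : π f = 0 := by
    simp [π, Ideal.Quotient.eq_zero_iff_mem, Ideal.mem_span_singleton]
  ext v
  simp only [LinearMap.mem_ker, LinearMap.mem_range, Matrix.mulVecLin_apply]
  constructor
  · intro hv
    obtain ⟨u, hu⟩ : ∃ u : Fin n → S, (fun i => π (u i)) = v := by
      choose u hu using fun i => Ideal.Quotient.mk_surjective (v i)
      exact ⟨u, funext hu⟩
    have h0 : ∀ i, π (Phi.mulVec u i) = 0 := by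
      intro i
      have := congrFun hv i
      rw [← hu, map_mulVec_comm] at this
      exact this
    have hdvd : ∀ i, f ∣ Phi.mulVec u i := fun i => by
      have := h0 i
      rwa [Ideal.Quotient.eq_zero_iff_mem, Ideal.mem_span_singleton] at this
    choose w hw using hdvd
    have key : u = Psi.mulVec w := by
      have e1 : Psi.mulVec (Phi.mulVec u) = f • u := by
        rw [Matrix.mulVec_mulVec, h1, Matrix.smul_mulVec, Matrix.one_mulVec]
      have e2 : Phi.mulVec u = f • w := funext hw
      rw [e2, Matrix.mulVec_smul] at e1
      funext i
      have := congrFun e1 i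
      simp only [Pi.smul_apply, smul_eq_mul] at this
      exact (mul_left_cancel₀ hf this.symm)
    refine ⟨fun i => π (w i), ?_⟩
    rw [map_mulVec_comm, ← hu]
    funext i
    rw [← key]
  · rintro ⟨w, rfl⟩
    rw [Matrix.mulVec_mulVec, ← Matrix.map_mul, h2]
    funext i
    simp [Matrix.mulVec, dotProduct, Matrix.smul_apply, hπf, Matrix.one_apply, apply_ite π]
end
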